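/- If X₀ is a resistant optimal point of a convex optimization problem min_{X ∈ S} F(X), then X₀ is the unique global optimal point of the problem. -/

import Mathlib

open scoped RealInnerProductSpace

/-- A resistant optimal point of a convex optimization problem is its unique optimal point. -/
theorem resistant_optimal_point_unique {d : ℕ}
    (S : Set (EuclideanSpace ℝ (Fin d))) (F : EuclideanSpace ℝ (Fin d) → ℝ)
    (hS : Convex ℝ S) (hF : ConvexOn ℝ S F)
    (X₀ : EuclideanSpace ℝ (Fin d)) (hX₀ : X₀ ∈ S)
    (hopt : ∀ X ∈ S, F X₀ ≤ F X)
    (hres : ∀ N ∈ nhds X₀, ∃ M ∈ nhds (0 : EuclideanSpace ℝ (Fin d)),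
      ∀ D ∈ M, ∃ Y ∈ N, Y ∈ S ∧ ∀ X ∈ S, F Y + ⟪D, Y⟫ ≤ F X + ⟪D, X⟫) :
    ∀ X' ∈ S, (∀ X ∈ S, F X' ≤ F X) → X' = X₀ := by
  intro X' hX'S hX'opt
  by_contra hne
  set r : ℝ := ‖X₀ - X'‖ with hr
  have hr0 : 0 < r := by
    simpa [hr, sub_eq_zero] using (fun h : X₀ = X' => hne h.symm)
  obtain ⟨M, hM, hMall⟩ := hres (Metric.ball X₀ (r / 2)) (Metric.ball_mem_nhds _ (by linarith))
  obtain ⟨δ, hδ0, hδM⟩ := Metric.mem_nhds_iff.mp hM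
  set ε : ℝ := δ / (2 * r) with hε
  have hε0 : 0 < ε := by positivity
  set D : EuclideanSpace ℝ (Fin d) := ε • (X₀ - X') with hD
  have hDM : D ∈ M := by
    apply hδM
    simp only [Metric.mem_ball, dist_zero_right, hD, norm_smul, Real.norm_eq_abs,
      abs_of_pos hε0, ← hr, hε]
    rw [abs_of_pos (by positivity : (0:ℝ) < δ / (2 * r)), div_mul_eq_mul_div, div_lt_iff₀ (by positivity)]
    nlinarith
  obtain ⟨Y, hYN, hYS, hYmin⟩ := hMall D hDM
  have h1 : F Y + ⟪D, Y⟫ ≤ F X' + ⟪D, X'⟫ := hYmin X' hX'S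
  have h2 : F X' ≤ F Y := hX'opt Y hYS
  have h3 : ⟪D, Y⟫ - ⟪D, X'⟫ ≤ 0 := by linarith
  have h4 : ⟪X₀ - X', Y - X'⟫ ≤ 0 := by
    have : ε * ⟪X₀ - X', Y - X'⟫ ≤ 0 := by
      have := h3
      rw [hD, real_inner_smul_left, real_inner_smul_left, ← mul_sub,
        ← inner_sub_right] at this
      exact this
    nlinarith
  have hsplit : Y - X' = (Y - X₀) + (X₀ - X') := by abel
  have h5 : ⟪X₀ - X', Y - X₀⟫ + r ^ 2 ≤ 0 := by
    have := h4
    rw [hsplit, inner_add_right, real_inner_self_eq_norm_sq] at this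
    simpa [hr] using this
  have hYd : ‖Y - X₀‖ < r / 2 := by
    simpa [dist_eq_norm] using hYN
  have h6 : |⟪X₀ - X', Y - X₀⟫| ≤ r * ‖Y - X₀‖ := by
    simpa [hr] using abs_real_inner_le_norm (X₀ - X') (Y - X₀)
  have h7 : -(r * (r / 2)) < ⟪X₀ - X', Y - X₀⟫ := by
    have := neg_abs_le ⟪X₀ - X', Y - X₀⟫
    nlinarith
  nlinarith
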